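/- In ℂ² ⊗ (ℂ² ⊗ ℂ²), neither e₁⊗(e₁⊗e₁) nor e₂⊗(e₂⊗e₂) belongs to the two-dimensional subspace span{e₁⊗(e₁⊗e₁ + e₂⊗e₂), e₂⊗(e₁⊗e₁ − e₂⊗e₂)}; indeed, this subspace contains no nonzero vector of the form φ ⊗ (φ' ⊗ φ'') with φ, φ', φ'' ∈ ℂ². -/
import Mathlib


open scoped TensorProduct

/-- The standard basis vectors of `ℂ²` (`e 0 = e₁`, `e 1 = e₂`). -/
noncomputable def e (i : Fin 2) : Fin 2 → ℂ := Pi.single i 1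

/-- The space `ℂ² ⊗ (ℂ² ⊗ ℂ²)`. -/
abbrev Qubit3 := (Fin 2 → ℂ) ⊗[ℂ] ((Fin 2 → ℂ) ⊗[ℂ] (Fin 2 → ℂ))

/-- The right singular subspace, in the partition 1|234, of the four-qubit cluster state:
`span{e₁⊗(e₁⊗e₁ + e₂⊗e₂), e₂⊗(e₁⊗e₁ − e₂⊗e₂)}`. -/
noncomputable def clusterRSS : Submodule ℂ Qubit3 :=
  Submodule.span ℂ
    {e 0 ⊗ₜ[ℂ] (e 0 ⊗ₜ[ℂ] e 0 + e 1 ⊗ₜ[ℂ] e 1),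
     e 1 ⊗ₜ[ℂ] (e 0 ⊗ₜ[ℂ] e 0 - e 1 ⊗ₜ[ℂ] e 1)}

/-- The coordinate functional extracting the `(i,j,k)` coefficient of a vector of `Qubit3`. -/
noncomputable def coord (i j k : Fin 2) : Qubit3 →ₗ[ℂ] ℂ :=
  TensorProduct.lift ((LinearMap.mul ℂ ℂ).compl₁₂ (LinearMap.proj i)
    (TensorProduct.lift ((LinearMap.mul ℂ ℂ).compl₁₂ (LinearMap.proj j) (LinearMap.proj k))))

lemma coord_tmul (i j k : Fin 2) (x y z : Fin 2 → ℂ) :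
    coord i j k (x ⊗ₜ[ℂ] (y ⊗ₜ[ℂ] z)) = x i * (y j * z k) := by
  simp [coord, TensorProduct.lift.tmul]

theorem cluster_subspace_contains_no_product_vector :
    e 0 ⊗ₜ[ℂ] (e 0 ⊗ₜ[ℂ] e 0) ∉ clusterRSS ∧
    e 1 ⊗ₜ[ℂ] (e 1 ⊗ₜ[ℂ] e 1) ∉ clusterRSS ∧
    ∀ φ φ' φ'' : Fin 2 → ℂ,
      φ ⊗ₜ[ℂ] (φ' ⊗ₜ[ℂ] φ'') ∈ clusterRSS → φ ⊗ₜ[ℂ] (φ' ⊗ₜ[ℂ] φ'') = 0 := by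
  refine ⟨?_, ?_, ?_⟩
  · intro h
    obtain ⟨a, b, hab⟩ := Submodule.mem_span_pair.mp h
    have h1 := congrArg (coord 0 0 0) hab
    have h2 := congrArg (coord 0 1 1) hab
    simp only [map_add, map_smul, TensorProduct.tmul_add, TensorProduct.tmul_sub, map_sub,
      coord_tmul, e, Pi.single_apply, smul_eq_mul] at h1 h2
    norm_num at h1 h2
    rw [h2] at h1
    exact one_ne_zero h1.symm
  · intro h
    obtain ⟨a, b, hab⟩ := Submodule.mem_span_pair.mp h
    have h1 := congrArg (coord 1 1 1) hab
    have h2 := congrArg (coord 1 0 0) hab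
    simp only [map_add, map_smul, TensorProduct.tmul_add, TensorProduct.tmul_sub, map_sub,
      coord_tmul, e, Pi.single_apply, smul_eq_mul] at h1 h2
    norm_num at h1 h2
    rw [h2] at h1
    norm_num at h1
  · intro φ φ' φ'' h
    obtain ⟨a, b, hab⟩ := Submodule.mem_span_pair.mp h
    have h1 := congrArg (coord 0 0 0) hab
    have h2 := congrArg (coord 0 1 1) hab
    have h3 := congrArg (coord 0 0 1) hab
    have h5 := congrArg (coord 1 0 0) hab
    have h6 := congrArg (coord 1 1 1) hab
    have h7 := congrArg (coord 1 0 1) hab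
    simp only [map_add, map_smul, TensorProduct.tmul_add, TensorProduct.tmul_sub, map_sub,
      coord_tmul, e, Pi.single_apply, smul_eq_mul] at h1 h2 h3 h5 h6 h7
    norm_num at h1 h2 h3 h5 h6 h7
    have ha : a = 0 := by
      rcases h3 with h | h | h
      · rw [h] at h1; simpa using h1
      · rw [h] at h1; simpa using h1
      · rw [h] at h2; simpa using h2
    have hb : b = 0 := by
      rcases h7 with h | h | h
      · rw [h] at h5; simpa using h5
      · rw [h] at h5; simpa using h5
      · rw [h] at h6; simpa using h6
    rw [← hab, ha, hb]
    simp
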